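/- (Equivalence of Problem 1 and Problem 2.) For a given incentive profile u (edge and base node costs nonnegative, continuous, nondecreasing), a feasible flow f satisfies the equilibrium constraint of Problem 1 (c_p(f,u) ≤ c_q(f,u) for all p, q with f_p > 0) if and only if f minimizes Φ°(g) + Σ_p g_p·u_p over feasible flows g, where Φ°(g) := Σ_{e∈E} ∫₀^{g_e} c_e(s) ds + Σ_{v∈V} ∫₀^{g_v} c_v(s) ds; consequently the feasible sets of flows in Problems 1 and 2 coincide for every u. -/
import Mathlib


open Set MeasureTheory intervalIntegral

section RoutingGame

variable {E V P : Type*} [Fintype E] [Fintype V] [Fintype P] [Nonempty P]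
  [DecidableEq E] [DecidableEq V]

/-- Edge flow: total flow of paths containing edge `e`. -/
noncomputable def edgeFlow (pathE : P → Finset E) (f : P → ℝ) (e : E) : ℝ :=
  ∑ p ∈ Finset.univ.filter (fun p => e ∈ pathE p), f p

/-- Node flow: total flow of paths containing node `v`. -/
noncomputable def nodeFlow (pathV : P → Finset V) (f : P → ℝ) (v : V) : ℝ :=
  ∑ p ∈ Finset.univ.filter (fun p => v ∈ pathV p), f p

/-- Feasible flows: nonnegative, summing to one. -/
def Feasible (f : P → ℝ) : Prop := (∀ p, 0 ≤ f p) ∧ ∑ p, f p = 1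

/-- Path cost with additive path-specific node incentives. -/
noncomputable def pathCost (pathE : P → Finset E) (pathV : P → Finset V)
    (ce : E → ℝ → ℝ) (cv : V → ℝ → ℝ) (u : V → P → ℝ) (f : P → ℝ) (p : P) : ℝ :=
  (∑ e ∈ pathE p, ce e (edgeFlow pathE f e)) +
  (∑ v ∈ pathV p, (cv v (nodeFlow pathV f v) + u v p))

/-- Wardrop equilibrium: every used path has minimal cost. -/
def IsWardrop (pathE : P → Finset E) (pathV : P → Finset V)
    (ce : E → ℝ → ℝ) (cv : V → ℝ → ℝ) (u : V → P → ℝ) (f : P → ℝ) : Prop :=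
  ∀ p q : P, 0 < f p →
    pathCost pathE pathV ce cv u f p ≤ pathCost pathE pathV ce cv u f q

/-- The potential function `Φ(f,u)`. -/
noncomputable def potential (pathE : P → Finset E) (pathV : P → Finset V)
    (ce : E → ℝ → ℝ) (cv : V → ℝ → ℝ) (u : V → P → ℝ) (f : P → ℝ) : ℝ :=
  (∑ e, ∫ s in (0:ℝ)..(edgeFlow pathE f e), ce e s) +
  (∑ v, ∫ s in (0:ℝ)..(nodeFlow pathV f v), cv v s) +
  (∑ p, f p * ∑ v ∈ pathV p, u v p)

/-- Social cost. -/
noncomputable def socialCost (pathE : P → Finset E) (pathV : P → Finset V)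
    (ce : E → ℝ → ℝ) (cv : V → ℝ → ℝ) (u : V → P → ℝ) (f : P → ℝ) : ℝ :=
  ∑ p, f p * pathCost pathE pathV ce cv u f p

/-- The base potential `Φ°(f)` (no incentives). -/
noncomputable def basePotential (pathE : P → Finset E) (pathV : P → Finset V)
    (ce : E → ℝ → ℝ) (cv : V → ℝ → ℝ) (f : P → ℝ) : ℝ :=
  (∑ e, ∫ s in (0:ℝ)..(edgeFlow pathE f e), ce e s) +
  (∑ v, ∫ s in (0:ℝ)..(nodeFlow pathV f v), cv v s)

/-! ### Auxiliary lemmas -/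

lemma rg_integral_diff_ge (c : ℝ → ℝ) (hc_cont : ContinuousOn c (Set.Icc 0 1))
    (hc_mono : MonotoneOn c (Set.Icc 0 1)) {a b : ℝ} (ha : a ∈ Set.Icc (0:ℝ) 1)
    (hb : b ∈ Set.Icc (0:ℝ) 1) :
    (b - a) * c a ≤ (∫ s in (0:ℝ)..b, c s) - ∫ s in (0:ℝ)..a, c s := by
  have h01 : (0:ℝ) ∈ Set.Icc (0:ℝ) 1 := by constructor <;> norm_num
  have hint : ∀ x y : ℝ, x ∈ Set.Icc (0:ℝ) 1 → y ∈ Set.Icc (0:ℝ) 1 →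
      IntervalIntegrable c MeasureTheory.volume x y := fun x y hx hy =>
    (hc_cont.mono (Set.uIcc_subset_Icc hx hy)).intervalIntegrable
  have hadd : (∫ s in (0:ℝ)..a, c s) + (∫ s in a..b, c s) = ∫ s in (0:ℝ)..b, c s :=
    intervalIntegral.integral_add_adjacent_intervals (hint 0 a h01 ha) (hint a b ha hb)
  have key : (b - a) * c a ≤ ∫ s in a..b, c s := by
    rcases le_total a b with hab | hab
    · have : ∫ s in a..b, (fun _ => c a) s ≤ ∫ s in a..b, c s := by
        apply intervalIntegral.integral_mono_on hab intervalIntegrable_const (hint a b ha hb)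
        intro x hx
        exact hc_mono ha (Set.mem_of_mem_of_subset hx (Set.Icc_subset_Icc ha.1 hb.2)) hx.1
      simpa [smul_eq_mul, mul_comm] using this
    · have : ∫ s in b..a, c s ≤ ∫ s in b..a, (fun _ => c a) s := by
        apply intervalIntegral.integral_mono_on hab (hint b a hb ha) intervalIntegrable_const
        intro x hx
        exact hc_mono (Set.mem_of_mem_of_subset hx (Set.Icc_subset_Icc hb.1 ha.2)) ha hx.2
      rw [intervalIntegral.integral_symm]
      simp only [intervalIntegral.integral_const, smul_eq_mul] at this ⊢
      nlinarith [this]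
  linarith

lemma rg_integral_diff_le (c : ℝ → ℝ) (hc_cont : ContinuousOn c (Set.Icc 0 1))
    (hc_mono : MonotoneOn c (Set.Icc 0 1)) {a b : ℝ} (ha : a ∈ Set.Icc (0:ℝ) 1)
    (hb : b ∈ Set.Icc (0:ℝ) 1) :
    (∫ s in (0:ℝ)..b, c s) - (∫ s in (0:ℝ)..a, c s) ≤ (b - a) * c b := by
  have := rg_integral_diff_ge c hc_cont hc_mono hb ha
  linarith

lemma rg_swap_sum {E P : Type*} [Fintype E] [Fintype P] [DecidableEq E] (pathE : P → Finset E)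
    (w : P → ℝ) (h : E → ℝ) :
    ∑ e, (∑ p ∈ Finset.univ.filter (fun p => e ∈ pathE p), w p) * h e
      = ∑ p, w p * ∑ e ∈ pathE p, h e := by
  simp_rw [Finset.sum_mul, Finset.sum_filter, Finset.mul_sum]
  rw [Finset.sum_comm]
  congr 1; ext p
  rw [← Finset.sum_filter]
  congr 1
  simp

lemma rg_edgeFlow_mem {pathE : P → Finset E} {f : P → ℝ} (hf : Feasible f) (e : E) :
    edgeFlow pathE f e ∈ Set.Icc (0:ℝ) 1 := by
  constructor
  · exact Finset.sum_nonneg fun p _ => hf.1 p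
  · rw [← hf.2]
    exact Finset.sum_le_sum_of_subset_of_nonneg (Finset.filter_subset _ _)
      (fun p _ _ => hf.1 p)

lemma rg_nodeFlow_mem {pathV : P → Finset V} {f : P → ℝ} (hf : Feasible f) (v : V) :
    nodeFlow pathV f v ∈ Set.Icc (0:ℝ) 1 := by
  constructor
  · exact Finset.sum_nonneg fun p _ => hf.1 p
  · rw [← hf.2]
    exact Finset.sum_le_sum_of_subset_of_nonneg (Finset.filter_subset _ _)
      (fun p _ _ => hf.1 p)

lemma rg_edgeFlow_sub (pathE : P → Finset E) (f g : P → ℝ) (e : E) :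
    edgeFlow pathE g e - edgeFlow pathE f e
      = ∑ p ∈ Finset.univ.filter (fun p => e ∈ pathE p), (g p - f p) := by
  simp [edgeFlow, Finset.sum_sub_distrib]

lemma rg_nodeFlow_sub (pathV : P → Finset V) (f g : P → ℝ) (v : V) :
    nodeFlow pathV g v - nodeFlow pathV f v
      = ∑ p ∈ Finset.univ.filter (fun p => v ∈ pathV p), (g p - f p) := by
  simp [nodeFlow, Finset.sum_sub_distrib]

/-- Lower gradient bound: `Φ(g,u) - Φ(f,u) ≥ Σ_p (g_p - f_p) c_p(f,u)`. -/
lemma rg_grad_lower (pathE : P → Finset E) (pathV : P → Finset V)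
    (ce : E → ℝ → ℝ) (cv : V → ℝ → ℝ) (u : V → P → ℝ)
    (hce_cont : ∀ e, ContinuousOn (ce e) (Set.Icc (0:ℝ) 1))
    (hce_mono : ∀ e, MonotoneOn (ce e) (Set.Icc (0:ℝ) 1))
    (hcv_cont : ∀ v, ContinuousOn (cv v) (Set.Icc (0:ℝ) 1))
    (hcv_mono : ∀ v, MonotoneOn (cv v) (Set.Icc (0:ℝ) 1))
    {f g : P → ℝ} (hf : Feasible f) (hg : Feasible g) :
    ∑ p, (g p - f p) * pathCost pathE pathV ce cv u f p ≤
      (basePotential pathE pathV ce cv g + ∑ p, g p * ∑ v ∈ pathV p, u v p) -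
      (basePotential pathE pathV ce cv f + ∑ p, f p * ∑ v ∈ pathV p, u v p) := by
  have hE : ∑ e, (edgeFlow pathE g e - edgeFlow pathE f e) * ce e (edgeFlow pathE f e) ≤
      (∑ e, ∫ s in (0:ℝ)..(edgeFlow pathE g e), ce e s) -
      ∑ e, ∫ s in (0:ℝ)..(edgeFlow pathE f e), ce e s := by
    rw [← Finset.sum_sub_distrib]
    exact Finset.sum_le_sum fun e _ =>
      rg_integral_diff_ge (ce e) (hce_cont e) (hce_mono e) (rg_edgeFlow_mem hf e)
        (rg_edgeFlow_mem hg e)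
  have hV : ∑ v, (nodeFlow pathV g v - nodeFlow pathV f v) * cv v (nodeFlow pathV f v) ≤
      (∑ v, ∫ s in (0:ℝ)..(nodeFlow pathV g v), cv v s) -
      ∑ v, ∫ s in (0:ℝ)..(nodeFlow pathV f v), cv v s := by
    rw [← Finset.sum_sub_distrib]
    exact Finset.sum_le_sum fun v _ =>
      rg_integral_diff_ge (cv v) (hcv_cont v) (hcv_mono v) (rg_nodeFlow_mem hf v)
        (rg_nodeFlow_mem hg v)
  have hEswap : ∑ e, (edgeFlow pathE g e - edgeFlow pathE f e) * ce e (edgeFlow pathE f e)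
      = ∑ p, (g p - f p) * ∑ e ∈ pathE p, ce e (edgeFlow pathE f e) := by
    simp_rw [rg_edgeFlow_sub]
    exact rg_swap_sum pathE _ _
  have hVswap : ∑ v, (nodeFlow pathV g v - nodeFlow pathV f v) * cv v (nodeFlow pathV f v)
      = ∑ p, (g p - f p) * ∑ v ∈ pathV p, cv v (nodeFlow pathV f v) := by
    simp_rw [rg_nodeFlow_sub]
    exact rg_swap_sum pathV _ _
  have hlin : ∑ p, (g p - f p) * ∑ v ∈ pathV p, u v p
      = (∑ p, g p * ∑ v ∈ pathV p, u v p) - ∑ p, f p * ∑ v ∈ pathV p, u v p := by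
    rw [← Finset.sum_sub_distrib]
    congr 1; ext p; ring
  have hdecomp : ∀ p, pathCost pathE pathV ce cv u f p
      = (∑ e ∈ pathE p, ce e (edgeFlow pathE f e))
        + (∑ v ∈ pathV p, cv v (nodeFlow pathV f v)) + ∑ v ∈ pathV p, u v p := by
    intro p
    simp [pathCost, Finset.sum_add_distrib]
    ring
  calc ∑ p, (g p - f p) * pathCost pathE pathV ce cv u f p
      = (∑ p, (g p - f p) * ∑ e ∈ pathE p, ce e (edgeFlow pathE f e))
        + (∑ p, (g p - f p) * ∑ v ∈ pathV p, cv v (nodeFlow pathV f v))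
        + ∑ p, (g p - f p) * ∑ v ∈ pathV p, u v p := by
        simp_rw [hdecomp, ← Finset.sum_add_distrib]
        congr 1; ext p; ring
    _ ≤ _ := by
        rw [hlin, ← hEswap, ← hVswap]
        simp only [basePotential]
        linarith

/-- Upper gradient bound: `Φ(g,u) - Φ(f,u) ≤ Σ_p (g_p - f_p) c_p(g,u)`. -/
lemma rg_grad_upper (pathE : P → Finset E) (pathV : P → Finset V)
    (ce : E → ℝ → ℝ) (cv : V → ℝ → ℝ) (u : V → P → ℝ)
    (hce_cont : ∀ e, ContinuousOn (ce e) (Set.Icc (0:ℝ) 1))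
    (hce_mono : ∀ e, MonotoneOn (ce e) (Set.Icc (0:ℝ) 1))
    (hcv_cont : ∀ v, ContinuousOn (cv v) (Set.Icc (0:ℝ) 1))
    (hcv_mono : ∀ v, MonotoneOn (cv v) (Set.Icc (0:ℝ) 1))
    {f g : P → ℝ} (hf : Feasible f) (hg : Feasible g) :
    (basePotential pathE pathV ce cv g + ∑ p, g p * ∑ v ∈ pathV p, u v p) -
      (basePotential pathE pathV ce cv f + ∑ p, f p * ∑ v ∈ pathV p, u v p) ≤
    ∑ p, (g p - f p) * pathCost pathE pathV ce cv u g p := by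
  have := rg_grad_lower pathE pathV ce cv u hce_cont hce_mono hcv_cont hcv_mono hg hf
  have h2 : ∑ p, (f p - g p) * pathCost pathE pathV ce cv u g p
      = - ∑ p, (g p - f p) * pathCost pathE pathV ce cv u g p := by
    rw [← Finset.sum_neg_distrib]
    congr 1; ext p; ring
  rw [h2] at this
  linarith
/-- **Equivalence of Problem 1 and Problem 2.** A feasible flow satisfies the
Wardrop equilibrium constraint iff it minimizes `Φ°(g) + Σ_p g_p·u_p` over feasible flows;
consequently the feasible sets of flows in the two problems coincide. -/
theorem problem1_equiv_problem2
    (pathE : P → Finset E) (pathV : P → Finset V)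
    (ce : E → ℝ → ℝ) (cv : V → ℝ → ℝ) (u : V → P → ℝ)
    (hce_nn : ∀ e, ∀ x ∈ Set.Icc (0:ℝ) 1, 0 ≤ ce e x)
    (hce_cont : ∀ e, ContinuousOn (ce e) (Set.Icc (0:ℝ) 1))
    (hce_mono : ∀ e, MonotoneOn (ce e) (Set.Icc (0:ℝ) 1))
    (hcv_nn : ∀ v, ∀ x ∈ Set.Icc (0:ℝ) 1, 0 ≤ cv v x)
    (hcv_cont : ∀ v, ContinuousOn (cv v) (Set.Icc (0:ℝ) 1))
    (hcv_mono : ∀ v, MonotoneOn (cv v) (Set.Icc (0:ℝ) 1))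
 :
    (∀ f : P → ℝ, Feasible f →
      (IsWardrop pathE pathV ce cv u f ↔
        ∀ g : P → ℝ, Feasible g →
          basePotential pathE pathV ce cv f + (∑ p, f p * ∑ v ∈ pathV p, u v p) ≤
            basePotential pathE pathV ce cv g + (∑ p, g p * ∑ v ∈ pathV p, u v p))) ∧
    {f : P → ℝ | Feasible f ∧ IsWardrop pathE pathV ce cv u f} =
      {f : P → ℝ | Feasible f ∧
        ∀ g : P → ℝ, Feasible g →
          basePotential pathE pathV ce cv f + (∑ p, f p * ∑ v ∈ pathV p, u v p) ≤
            basePotential pathE pathV ce cv g + (∑ p, g p * ∑ v ∈ pathV p, u v p)} := by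
  have main : ∀ f : P → ℝ, Feasible f →
      (IsWardrop pathE pathV ce cv u f ↔
        ∀ g : P → ℝ, Feasible g →
          basePotential pathE pathV ce cv f + (∑ p, f p * ∑ v ∈ pathV p, u v p) ≤
            basePotential pathE pathV ce cv g + (∑ p, g p * ∑ v ∈ pathV p, u v p)) := by
    intro f hf
    constructor
    · -- Wardrop → minimizer
      intro hw g hg
      set C : P → ℝ := pathCost pathE pathV ce cv u f with hC
      have hkey : ∑ p, f p * C p ≤ ∑ p, g p * C p := by
        have h1 : ∑ p, f p * C p = ∑ p, ∑ q, f p * g q * C p := by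
          refine Finset.sum_congr rfl fun p _ => ?_
          calc f p * C p = f p * C p * ∑ q, g q := by rw [hg.2]; ring
            _ = ∑ q, f p * g q * C p := by rw [Finset.mul_sum]; exact Finset.sum_congr rfl fun q _ => by ring
        have h2 : ∑ q, g q * C q = ∑ p, ∑ q, f p * g q * C q := by
          rw [Finset.sum_comm]
          refine Finset.sum_congr rfl fun q _ => ?_
          calc g q * C q = g q * C q * ∑ p, f p := by rw [hf.2]; ring
            _ = ∑ p, f p * g q * C q := by rw [Finset.mul_sum]; exact Finset.sum_congr rfl fun p _ => by ring
        rw [h1, h2]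
        refine Finset.sum_le_sum fun p _ => Finset.sum_le_sum fun q _ => ?_
        rcases eq_or_lt_of_le (hf.1 p) with hp0 | hp0
        · rw [← hp0]; simp
        · have := hw p q hp0
          have h3 : 0 ≤ f p * g q := mul_nonneg (hf.1 p) (hg.1 q)
          calc f p * g q * C p ≤ f p * g q * C q := by nlinarith
            _ = f p * g q * C q := rfl
      have hgl := rg_grad_lower pathE pathV ce cv u hce_cont hce_mono hcv_cont hcv_mono hf hg
      have hsub : ∑ p, (g p - f p) * C p = (∑ p, g p * C p) - ∑ p, f p * C p := by
        rw [← Finset.sum_sub_distrib]; exact Finset.sum_congr rfl fun p _ => by ring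
      rw [hsub] at hgl
      linarith
    · -- minimizer → Wardrop
      classical
      intro hmin p q hp
      by_cases hpq : p = q
      · subst hpq; exact le_rfl
      set δ : P → ℝ := fun p' => (if p' = q then (1:ℝ) else 0) - (if p' = p then 1 else 0) with hδ
      set g : ℝ → P → ℝ := fun ε p' => f p' + ε * δ p' with hgdef
      have hδsum : ∑ p', δ p' = 0 := by
        simp [hδ, Finset.sum_sub_distrib]
      have hfeas : ∀ ε ∈ Set.Icc (0:ℝ) (f p), Feasible (g ε) := by
        intro ε hε
        constructor
        · intro p'
          by_cases h1 : p' = p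
          · subst h1
            have : δ p' = -1 := by simp [hδ, hpq]
            simp only [hgdef, this]
            linarith [hε.2]
          · by_cases h2 : p' = q
            · subst h2
              have : δ p' = 1 := by simp [hδ, h1]
              simp only [hgdef, this]
              have := hf.1 p'
              linarith [hε.1]
            · have : δ p' = 0 := by simp [hδ, h1, h2]
              simp only [hgdef, this]
              simpa using hf.1 p'
        · simp only [hgdef]
          rw [Finset.sum_add_distrib, hf.2, ← Finset.mul_sum, hδsum]
          ring
      have h0mem : (0:ℝ) ∈ Set.Icc (0:ℝ) (f p) := ⟨le_rfl, le_of_lt hp⟩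
      -- continuity of the relevant path costs in ε
      have hflowE : ∀ e, Continuous (fun ε => edgeFlow pathE (g ε) e) := by
        intro e
        unfold edgeFlow
        exact continuous_finset_sum _ fun p' _ =>
          continuous_const.add (continuous_id.mul continuous_const)
      have hflowV : ∀ v, Continuous (fun ε => nodeFlow pathV (g ε) v) := by
        intro v
        unfold nodeFlow
        exact continuous_finset_sum _ fun p' _ =>
          continuous_const.add (continuous_id.mul continuous_const)
      have hCcont : ∀ r : P, ContinuousOn (fun ε => pathCost pathE pathV ce cv u (g ε) r)
          (Set.Icc 0 (f p)) := by
        intro r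
        unfold pathCost
        apply ContinuousOn.add
        · apply continuousOn_finset_sum
          intro e _
          exact (hce_cont e).comp (hflowE e).continuousOn
            (fun ε hε => rg_edgeFlow_mem (hfeas ε hε) e)
        · apply continuousOn_finset_sum
          intro v _
          apply ContinuousOn.add _ continuousOn_const
          exact (hcv_cont v).comp (hflowV v).continuousOn
            (fun ε hε => rg_nodeFlow_mem (hfeas ε hε) v)
      set φ : ℝ → ℝ := fun ε => pathCost pathE pathV ce cv u (g ε) q -
        pathCost pathE pathV ce cv u (g ε) p with hφ
      have hφcont : ContinuousWithinAt φ (Set.Icc 0 (f p)) 0 :=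
        (((hCcont q).sub (hCcont p)) 0 h0mem)
      have hg0 : g 0 = f := by funext p'; simp [hgdef]
      have hφ0 : φ 0 = pathCost pathE pathV ce cv u f q - pathCost pathE pathV ce cv u f p := by
        simp [hφ, hg0]
      -- φ is nonnegative on (0, f p]
      have hφnn : ∀ ε ∈ Set.Ioc (0:ℝ) (f p), 0 ≤ φ ε := by
        intro ε hε
        have hεIcc : ε ∈ Set.Icc (0:ℝ) (f p) := ⟨le_of_lt hε.1, hε.2⟩
        have hfeasε := hfeas ε hεIcc
        have h1 := hmin (g ε) hfeasε
        have h2 := rg_grad_upper pathE pathV ce cv u hce_cont hce_mono hcv_cont hcv_mono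
          hf hfeasε
        have h3 : ∑ p', (g ε p' - f p') * pathCost pathE pathV ce cv u (g ε) p' = ε * φ ε := by
          have : ∀ p', (g ε p' - f p') = ε * δ p' := fun p' => by simp [hgdef]
          simp only [this, hφ, hδ, sub_mul, ite_mul, one_mul, zero_mul, mul_assoc]
          rw [← Finset.mul_sum]
          congr 1
          rw [Finset.sum_sub_distrib]
          simp [Finset.sum_ite_eq']
        rw [h3] at h2
        have h4 : 0 ≤ ε * φ ε := by linarith
        by_contra hneg
        push_neg at hneg
        nlinarith [hε.1]
      -- take the limit ε → 0⁺
      have hclos : (0:ℝ) ∈ closure (Set.Ioc 0 (f p)) := by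
        rw [closure_Ioc (ne_of_lt hp)]
        exact h0mem
      haveI hNB : (nhdsWithin (0:ℝ) (Set.Ioc 0 (f p))).NeBot :=
        mem_closure_iff_nhdsWithin_neBot.mp hclos
      have htend : Filter.Tendsto φ (nhdsWithin (0:ℝ) (Set.Ioc 0 (f p))) (nhds (φ 0)) :=
        hφcont.tendsto.mono_left (nhdsWithin_mono 0 Set.Ioc_subset_Icc_self)
      have hfin : 0 ≤ φ 0 :=
        ge_of_tendsto htend (Filter.eventually_of_mem self_mem_nhdsWithin hφnn)
      rw [hφ0] at hfin
      linarith
  refine ⟨main, ?_⟩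
  ext f
  simp only [Set.mem_setOf_eq]
  exact and_congr_right fun hfeas => main f hfeas

end RoutingGame
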